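/- Let G be an abelian group such that G cannot be written as KL for any two proper subgroups K, L of G. Then G is a cyclic p-group or a quasicyclic (Prüfer) p-group for some prime p. -/

import Mathlib

open scoped Pointwise

/-- The Prüfer `p`-group, modelled as the `p`-primary component of `ℚ/ℤ`. -/
def PruferSubgroup (p : ℕ) : AddSubgroup (AddCircle (1 : ℚ)) where
  carrier := {x | ∃ n : ℕ, (p ^ n : ℕ) • x = 0}
  zero_mem' := ⟨0, smul_zero _⟩
  add_mem' := by
    rintro a b ⟨m, hm⟩ ⟨k, hk⟩
    refine ⟨m + k, ?_⟩
    have ha : (p ^ (m + k) : ℕ) • a = 0 := by rw [add_comm, pow_add, mul_smul, hm, smul_zero]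
    have hb : (p ^ (m + k) : ℕ) • b = 0 := by rw [pow_add, mul_smul, hk, smul_zero]
    rw [smul_add, ha, hb, add_zero]
  neg_mem' := by
    rintro a ⟨m, hm⟩
    exact ⟨m, by rw [smul_neg, hm, neg_zero]⟩

abbrev PruferGroup (p : ℕ) : Type := ↥(PruferSubgroup p)

/-- A group is quasicyclic of type `p` if it is isomorphic to the Prüfer `p`-group. -/
def IsQuasicyclic (p : ℕ) (G : Type*) [Group G] : Prop :=
  Nonempty (G ≃* Multiplicative (PruferGroup p))

section Aux

variable {G : Type*} [CommGroup G]

lemma exists_maximal_avoiding (W : Subgroup G) (c : G) (hc : c ∉ W) :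
    ∃ M : Subgroup G, W ≤ M ∧ c ∉ M ∧ ∀ H : Subgroup G, M ≤ H → c ∉ H → H ≤ M := by
  obtain ⟨M, hWM, hmax⟩ := zorn_le_nonempty₀ {H : Subgroup G | c ∉ H}
    (fun ch hch hchain y hy => by
      haveI : Nonempty ch := ⟨⟨y, hy⟩⟩
      refine ⟨⨆ K : ch, (K : Subgroup G), ?_, fun z hz => le_iSup (fun K : ch => (K : Subgroup G)) ⟨z, hz⟩⟩
      intro hmem
      rw [Subgroup.mem_iSup_of_directed (hchain.directed)] at hmem
      obtain ⟨⟨K, hK⟩, hcK⟩ := hmem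
      exact hch hK hcK) W hc
  exact ⟨M, hWM, hmax.prop, fun H hMH hcH => hmax.2 hcH hMH⟩

lemma quotient_socle (M : Subgroup G) (c : G) (hc : c ∉ M)
    (hmax : ∀ H : Subgroup G, M ≤ H → c ∉ H → H ≤ M) :
    ∀ S : Subgroup (G ⧸ M), S ≠ ⊥ → (c : G ⧸ M) ∈ S := by
  intro S hS
  set f := QuotientGroup.mk' M
  by_contra hcS
  have hM : M ≤ S.comap f := by
    intro m hm
    simp only [Subgroup.mem_comap, f, QuotientGroup.mk'_apply]
    have : ((m : G) : G ⧸ M) = 1 := (QuotientGroup.eq_one_iff m).2 hm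
    rw [this]; exact S.one_mem
  have hle : S.comap f ≤ M := hmax _ hM (by simpa [f] using hcS)
  apply hS
  have hsurj : Function.Surjective f := QuotientGroup.mk'_surjective M
  have : S = (S.comap f).map f := (Subgroup.map_comap_eq_self_of_surjective hsurj S).symm
  rw [this, eq_bot_iff]
  rintro y ⟨x, hx, rfl⟩
  have : x ∈ M := hle hx
  simpa [Subgroup.mem_bot, f] using (QuotientGroup.eq_one_iff x).2 this

lemma orderOf_ne_zero_of_zpow {H : Type*} [Group H] {x : H} {k : ℤ} (hk : k ≠ 0)
    (hx : x ^ k = 1) : orderOf x ≠ 0 := by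
  intro h0
  rw [zpow_eq_one_iff_modEq, h0] at hx
  simp only [Nat.cast_zero, Int.ModEq] at hx
  simp only [Int.emod_zero] at hx
  exact hk hx

lemma pow_mem_of_maximal {p : ℕ} (hp : p.Prime) (M : Subgroup G) (c : G) (hc : c ∉ M)
    (hcp : c ^ p ∈ M) (hmax : ∀ H : Subgroup G, M ≤ H → c ∉ H → H ≤ M) :
    ∀ g : G, ∃ n : ℕ, g ^ p ^ n ∈ M := by
  intro g
  set Q := G ⧸ M
  set cb : Q := (c : Q) with hcb
  have hcb1 : cb ≠ 1 := fun h1 => hc ((QuotientGroup.eq_one_iff c).1 h1)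
  have hcbp : cb ^ p = 1 := by
    rw [hcb, ← QuotientGroup.mk_pow]
    exact (QuotientGroup.eq_one_iff _).2 hcp
  haveI : Fact p.Prime := ⟨hp⟩
  have hordc : orderOf cb = p := orderOf_eq_prime hcbp hcb1
  set gb : Q := (g : Q) with hgb
  by_cases hg1 : gb = 1
  · exact ⟨0, by simpa [pow_one] using (QuotientGroup.eq_one_iff g).1 hg1⟩
  have hsocle := quotient_socle M c hc hmax
  -- gb has finite order
  have hzb : cb ∈ Subgroup.zpowers gb := by
    apply hsocle
    simp only [ne_eq, Subgroup.zpowers_eq_bot]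
    exact hg1
  obtain ⟨k, hk⟩ := hzb
  have hord : orderOf gb ≠ 0 := by
    intro h0
    have hk0 : k ≠ 0 := by rintro rfl; exact hcb1 (by simpa using hk.symm)
    have : gb ^ (k * p) = 1 := by
      rw [zpow_mul]
      rw [show (gb ^ k : Q) = cb from hk]
      simpa using hcbp
    exact orderOf_ne_zero_of_zpow (by simp [hk0, hp.ne_zero]) this h0
  -- every prime factor of orderOf gb is p
  have hfac : ∀ q : ℕ, q.Prime → q ∣ orderOf gb → q = p := by
    intro q hq hdvd
    set y : Q := gb ^ (orderOf gb / q) with hy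
    have hyord : orderOf y = q := by
      have hfin : IsOfFinOrder gb := orderOf_pos_iff.1 (Nat.pos_of_ne_zero hord)
      rw [hy, hfin.orderOf_pow]
      rw [Nat.gcd_eq_right (Nat.div_dvd_of_dvd hdvd)]
      rw [Nat.div_div_self hdvd hord]
    have hy1 : y ≠ 1 := by
      intro h1; rw [h1] at hyord; simp at hyord; exact hq.one_lt.ne' hyord.symm
    have hcy : cb ∈ Subgroup.zpowers y := hsocle _ (by simpa [Subgroup.zpowers_eq_bot] using hy1)
    obtain ⟨j, hj⟩ := hcy
    have : cb ^ (q : ℤ) = 1 := by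
      rw [← hj, ← zpow_mul, mul_comm, zpow_mul]
      rw [show (y ^ (q:ℤ) : Q) = 1 by rw [zpow_natCast, ← hyord, pow_orderOf_eq_one]]
      simp
    have hpq : p ∣ q := by
      have := orderOf_dvd_of_pow_eq_one (by simpa using this : cb ^ q = 1)
      rwa [hordc] at this
    exact ((Nat.prime_dvd_prime_iff_eq hp hq).1 hpq).symm
  have hn := Nat.eq_prime_pow_of_unique_prime_dvd hord
    (fun {q} hq hdvd => hfac q hq hdvd)
  refine ⟨(orderOf gb).primeFactorsList.length, ?_⟩
  have : gb ^ p ^ (orderOf gb).primeFactorsList.length = 1 := by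
    rw [← hn, pow_orderOf_eq_one]
  rw [hgb, ← QuotientGroup.mk_pow] at this
  exact (QuotientGroup.eq_one_iff _).1 this

lemma no_two_primes (hP : ∀ K L : Subgroup G, K ⊔ L = ⊤ → K = ⊤ ∨ L = ⊤)
    {p q : ℕ} (hp : p.Prime) (hq : q.Prime) (hpq : p ≠ q) (c : G)
    (h1 : c ∉ Subgroup.zpowers (c ^ p)) (h2 : c ∉ Subgroup.zpowers (c ^ q)) : False := by
  obtain ⟨M, hWM, hcM, hMmax⟩ := exists_maximal_avoiding (Subgroup.zpowers (c ^ p)) c h1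
  obtain ⟨N, hWN, hcN, hNmax⟩ := exists_maximal_avoiding (Subgroup.zpowers (c ^ q)) c h2
  have hMp : ∀ g : G, ∃ n : ℕ, g ^ p ^ n ∈ M :=
    pow_mem_of_maximal hp M c hcM (hWM (Subgroup.mem_zpowers _)) hMmax
  have hNq : ∀ g : G, ∃ n : ℕ, g ^ q ^ n ∈ N :=
    pow_mem_of_maximal hq N c hcN (hWN (Subgroup.mem_zpowers _)) hNmax
  have htop : M ⊔ N = ⊤ := by
    rw [eq_top_iff]
    intro g _
    obtain ⟨m, hm⟩ := hMp g
    obtain ⟨n, hn⟩ := hNq g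
    have hcop : Nat.Coprime (p ^ m) (q ^ n) :=
      Nat.Coprime.pow m n ((Nat.coprime_primes hp hq).2 hpq)
    have hbez : (Nat.gcd (p ^ m) (q ^ n) : ℤ) =
        (p ^ m : ℕ) * Nat.gcdA (p ^ m) (q ^ n) + (q ^ n : ℕ) * Nat.gcdB (p ^ m) (q ^ n) :=
      Nat.gcd_eq_gcd_ab _ _
    rw [hcop] at hbez
    have : g = (g ^ (p ^ m)) ^ Nat.gcdA (p ^ m) (q ^ n)
        * (g ^ (q ^ n)) ^ Nat.gcdB (p ^ m) (q ^ n) := by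
      rw [← zpow_natCast g (p ^ m), ← zpow_natCast g (q ^ n), ← zpow_mul, ← zpow_mul,
        ← zpow_add, ← hbez]
      simp
    rw [this]
    exact mul_mem (Subgroup.mem_sup_left (zpow_mem hm _)) (Subgroup.mem_sup_right (zpow_mem hn _))
  rcases hP M N htop with h | h
  · exact hcM (h ▸ Subgroup.mem_top c)
  · exact hcN (h ▸ Subgroup.mem_top c)

lemma not_mem_zpowers_pow_self {c : G} {r : ℕ} (hr : 2 ≤ r)
    (hcase : orderOf c = 0 ∨ r ∣ orderOf c) : c ∉ Subgroup.zpowers (c ^ r) := by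
  rintro ⟨k, hk⟩
  simp only at hk
  have key : c ^ ((r : ℤ) * k - 1) = 1 := by
    rw [zpow_sub, zpow_mul, zpow_natCast, hk]; simp
  have hne : (r : ℤ) * k - 1 ≠ 0 := by
    intro h
    have hd : (r : ℤ) ∣ 1 := ⟨k, by omega⟩
    have := Int.le_of_dvd one_pos hd
    omega
  rcases hcase with h0 | hdvd
  · exact orderOf_ne_zero_of_zpow hne key h0
  · rw [zpow_eq_one_iff_modEq] at key
    have hdv : (orderOf c : ℤ) ∣ 0 - ((r : ℤ) * k - 1) := Int.ModEq.dvd key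
    have hrd : (r : ℤ) ∣ 0 - ((r : ℤ) * k - 1) :=
      dvd_trans (Int.natCast_dvd_natCast.2 hdvd) hdv
    have hr1 : (r : ℤ) ∣ 1 := by
      have h2 : (r : ℤ) ∣ (r : ℤ) * k := Dvd.intro k rfl
      have h3 : (1 : ℤ) = (0 - ((r : ℤ) * k - 1)) + (r : ℤ) * k := by ring
      rw [h3]
      exact dvd_add hrd h2
    have := Int.le_of_dvd one_pos hr1
    omega

lemma order_finite (hP : ∀ K L : Subgroup G, K ⊔ L = ⊤ → K = ⊤ ∨ L = ⊤) (g : G) :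
    orderOf g ≠ 0 := by
  intro h0
  exact no_two_primes hP Nat.prime_two Nat.prime_three (by norm_num) g
    (not_mem_zpowers_pow_self (by norm_num) (Or.inl h0))
    (not_mem_zpowers_pow_self (by norm_num) (Or.inl h0))

lemma unique_prime_dvd (hP : ∀ K L : Subgroup G, K ⊔ L = ⊤ → K = ⊤ ∨ L = ⊤) (g : G)
    {r s : ℕ} (hr : r.Prime) (hs : s.Prime) (hrg : r ∣ orderOf g) (hsg : s ∣ orderOf g) :
    r = s := by
  by_contra hne
  exact no_two_primes hP hr hs hne g
    (not_mem_zpowers_pow_self hr.two_le (Or.inr hrg))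
    (not_mem_zpowers_pow_self hs.two_le (Or.inr hsg))

lemma orderOf_pow_div_prime {g : G} {r : ℕ} (hr : r.Prime) (h0 : orderOf g ≠ 0)
    (hdvd : r ∣ orderOf g) : orderOf (g ^ (orderOf g / r)) = r := by
  have hfin : IsOfFinOrder g := orderOf_pos_iff.1 (Nat.pos_of_ne_zero h0)
  rw [hfin.orderOf_pow, Nat.gcd_eq_right (Nat.div_dvd_of_dvd hdvd),
    Nat.div_div_self hdvd h0]

lemma ispgroup_of (hP : ∀ K L : Subgroup G, K ⊔ L = ⊤ → K = ⊤ ∨ L = ⊤)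
    {r : ℕ} (hr : r.Prime) {g₀ : G} (hg₀ : r ∣ orderOf g₀) : IsPGroup r G := by
  intro g
  have h0 : orderOf g ≠ 0 := order_finite hP g
  have huniq : ∀ {d : ℕ}, d.Prime → d ∣ orderOf g → d = r := by
    intro s hs hsg
    by_contra hne
    have h00 : orderOf g₀ ≠ 0 := order_finite hP g₀
    set a := g₀ ^ (orderOf g₀ / r) with ha
    set b := g ^ (orderOf g / s) with hb
    have hoa : orderOf a = r := orderOf_pow_div_prime hr h00 hg₀
    have hob : orderOf b = s := orderOf_pow_div_prime hs h0 hsg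
    have hco : Nat.Coprime (orderOf a) (orderOf b) := by
      rw [hoa, hob]; exact (Nat.coprime_primes hr hs).2 (fun h => hne h.symm)
    have hoab : orderOf (a * b) = r * s := by
      rw [(Commute.all a b).orderOf_mul_eq_mul_orderOf_of_coprime hco, hoa, hob]
    have := unique_prime_dvd hP (a * b) hr hs
      (hoab ▸ Dvd.intro_left s (by ring)) (hoab ▸ Dvd.intro_left r rfl)
    exact hne this.symm
  have hn := Nat.eq_prime_pow_of_unique_prime_dvd h0 huniq
  exact ⟨(orderOf g).primeFactorsList.length, by rw [← hn, pow_orderOf_eq_one]⟩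

lemma divisible_of_noncyclic (hP : ∀ K L : Subgroup G, K ⊔ L = ⊤ → K = ⊤ ∨ L = ⊤)
    (hnc : ∀ g : G, Subgroup.zpowers g ≠ ⊤) {p : ℕ} (hp : p.Prime) (g : G) :
    ∃ y : G, y ^ p = g := by
  by_contra hno
  push_neg at hno
  have hgW : g ∉ (powMonoidHom p : G →* G).range := by
    rintro ⟨y, hy⟩
    exact hno y hy
  obtain ⟨M, hWM, hgM, hMmax⟩ := exists_maximal_avoiding _ g hgW
  have htop : M ⊔ Subgroup.zpowers g = ⊤ := by
    rw [eq_top_iff]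
    intro x _
    by_cases hxM : x ∈ M
    · exact Subgroup.mem_sup_left hxM
    · have hgH : g ∈ M ⊔ Subgroup.zpowers x := by
        by_contra hgH
        exact hxM (hMmax _ le_sup_left hgH (Subgroup.mem_sup_right (Subgroup.mem_zpowers x)))
      rw [Subgroup.mem_sup] at hgH
      obtain ⟨m, hm, z, ⟨k, hk⟩, hmz⟩ := hgH
      simp only at hk
      by_cases hdvd : (p : ℤ) ∣ k
      · exfalso
        obtain ⟨k', rfl⟩ := hdvd
        apply hgM
        have : x ^ ((p : ℤ) * k') = (x ^ k') ^ p := by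
          rw [← zpow_natCast (x ^ k') p, ← zpow_mul, mul_comm]
        have hxk : x ^ ((p : ℤ) * k') ∈ M := by
          rw [this]
          exact hWM ⟨x ^ k', rfl⟩
        rw [← hmz, ← hk]
        exact mul_mem hm hxk
      · have hcop : IsCoprime (p : ℤ) k := by
          rw [Prime.coprime_iff_not_dvd (Nat.prime_iff_prime_int.1 hp)]
          exact hdvd
        obtain ⟨u, v, huv⟩ := hcop
        have hx : x = (x ^ (p : ℤ)) ^ u * (x ^ k) ^ v := by
          rw [← zpow_mul, ← zpow_mul, ← zpow_add, mul_comm ((p:ℤ)) u, mul_comm k v, huv, zpow_one]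
        rw [hx]
        apply mul_mem
        · apply Subgroup.mem_sup_left
          apply zpow_mem
          have : x ^ (p : ℤ) = x ^ p := zpow_natCast x p
          rw [this]
          exact hWM ⟨x, rfl⟩
        · apply zpow_mem
          have : x ^ k = m⁻¹ * g := by rw [← hmz, ← hk]; group
          rw [this]
          exact mul_mem (Subgroup.mem_sup_left (inv_mem hm)) (Subgroup.mem_sup_right (Subgroup.mem_zpowers g))
  rcases hP _ _ htop with h | h
  · exact hgM (h ▸ Subgroup.mem_top g)
  · exact hnc g h

lemma tower_gen (hP : ∀ K L : Subgroup G, K ⊔ L = ⊤ → K = ⊤ ∨ L = ⊤)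
    {p : ℕ} (hp : p.Prime) (hGp : IsPGroup p G) (a : ℕ → G)
    (horder : ∀ n, orderOf (a n) = p ^ (n + 1))
    (hstep : ∀ n, (a (n + 1)) ^ p = a n) :
    ∀ x : G, ∃ n, x ∈ Subgroup.zpowers (a n) := by
  haveI : Fact p.Prime := ⟨hp⟩
  have hmono : Monotone (fun n => Subgroup.zpowers (a n)) := by
    apply monotone_nat_of_le_succ
    intro n
    rw [Subgroup.zpowers_le]
    exact ⟨(p : ℤ), by simpa using (hstep n)⟩
  set D := ⨆ n, Subgroup.zpowers (a n) with hD
  have hmemD : ∀ x : G, x ∈ D ↔ ∃ n, x ∈ Subgroup.zpowers (a n) := fun x =>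
    Subgroup.mem_iSup_of_directed hmono.directed_le
  have ha0ne : a 0 ≠ 1 := by
    intro h1
    have := horder 0
    rw [h1, orderOf_one] at this
    exact hp.one_lt.ne (by simpa using this)
  have ha0D : a 0 ∈ D := (hmemD _).2 ⟨0, Subgroup.mem_zpowers _⟩
  obtain ⟨M, _, h0M, hMmax⟩ := exists_maximal_avoiding ⊥ (a 0)
    (by simpa [Subgroup.mem_bot] using ha0ne)
  have hsocle := quotient_socle M (a 0) h0M hMmax
  have hQ : IsPGroup p (G ⧸ M) := hGp.to_quotient M
  have key : ∀ n : ℕ, ∀ x : G, orderOf ((x : G ⧸ M)) = n → x ∈ M ⊔ D := by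
    intro n
    induction n using Nat.strong_induction_on with
    | _ n ih =>
      intro x hx
      by_cases hx1 : ((x : G ⧸ M)) = 1
      · exact Subgroup.mem_sup_left ((QuotientGroup.eq_one_iff x).1 hx1)
      · obtain ⟨k, hk⟩ := hQ ((x : G ⧸ M))
        have hn0 : n ≠ 0 := by
          rw [← hx]
          have hfo : IsOfFinOrder ((x : G ⧸ M)) :=
            isOfFinOrder_iff_pow_eq_one.2 ⟨p ^ k, pow_pos hp.pos k, hk⟩
          exact (orderOf_pos_iff.2 hfo).ne'
        have hndvd : n ∣ p ^ k := by rw [← hx]; exact orderOf_dvd_of_pow_eq_one hk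
        obtain ⟨i, hik, hi⟩ := (Nat.dvd_prime_pow hp).1 hndvd
        have hi1 : 1 ≤ i := by
          rcases Nat.eq_zero_or_pos i with h | h
          · exfalso
            apply hx1
            have h1 : orderOf ((x : G ⧸ M)) = 1 := by rw [hx, hi, h, pow_zero]
            exact orderOf_eq_one_iff.1 h1
          · exact h
        have hpn : p ∣ n := hi ▸ dvd_pow_self p (by omega : i ≠ 0)
        have hfin : IsOfFinOrder ((x : G ⧸ M)) := orderOf_pos_iff.1 (by omega : 0 < orderOf _)
        have hxp : orderOf (((x ^ p : G) : G ⧸ M)) = n / p := by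
          rw [QuotientGroup.mk_pow, hfin.orderOf_pow, hx, Nat.gcd_eq_right hpn]
        have hlt : n / p < n := Nat.div_lt_self (by omega) hp.one_lt
        have hxpD := ih (n / p) hlt (x ^ p) hxp
        rw [Subgroup.mem_sup] at hxpD
        obtain ⟨m, hm, d, hd, hmd⟩ := hxpD
        obtain ⟨i', t, ht⟩ : ∃ (i' : ℕ) (t : ℤ), (a i') ^ t = d := by
          obtain ⟨i', hi'⟩ := (hmemD d).1 hd
          obtain ⟨t, ht⟩ := hi'
          exact ⟨i', t, ht⟩
        set e := (a (i' + 1)) ^ t with he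
        have hep : e ^ p = d := by
          rw [he, ← zpow_natCast (((a (i' + 1)) ^ t)) p, ← zpow_mul, mul_comm, zpow_mul,
            zpow_natCast, hstep i', ht]
        have heD : e ∈ D := (hmemD _).2 ⟨i' + 1, zpow_mem (Subgroup.mem_zpowers _) t⟩
        set z := x * e⁻¹ with hz
        have hzp : z ^ p ∈ M := by
          have : z ^ p = m := by
            rw [hz, mul_pow, inv_pow, hep, ← hmd, mul_comm m d, mul_assoc]
            simp
          rw [this]; exact hm
        have hzbar : ((z : G ⧸ M)) ^ p = 1 := by
          rw [← QuotientGroup.mk_pow]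
          exact (QuotientGroup.eq_one_iff _).2 hzp
        have hxze : x = z * e := by rw [hz]; group
        by_cases hz1 : ((z : G ⧸ M)) = 1
        · rw [hxze]
          exact mul_mem (Subgroup.mem_sup_left ((QuotientGroup.eq_one_iff z).1 hz1))
            (Subgroup.mem_sup_right heD)
        · have hordz : orderOf ((z : G ⧸ M)) = p := orderOf_eq_prime hzbar hz1
          have ha0Q : ((a 0 : G) : G ⧸ M) ∈ Subgroup.zpowers ((z : G ⧸ M)) :=
            hsocle _ (by simpa [Subgroup.zpowers_eq_bot] using hz1)
          obtain ⟨j, hj⟩ := ha0Q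
          simp only at hj
          have ha0ne' : ((a 0 : G) : G ⧸ M) ≠ 1 := fun h1 =>
            h0M ((QuotientGroup.eq_one_iff _).1 h1)
          have hpj : ¬ (p : ℤ) ∣ j := by
            rintro ⟨j', rfl⟩
            apply ha0ne'
            rw [← hj, zpow_mul, zpow_natCast, hzbar, one_zpow]
          have hcop : IsCoprime (p : ℤ) j :=
            (Prime.coprime_iff_not_dvd (Nat.prime_iff_prime_int.1 hp)).2 hpj
          obtain ⟨u, v, huv⟩ := hcop
          have hzeq : ((z : G ⧸ M)) = ((a 0 : G) : G ⧸ M) ^ v := by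
            have h1 : ((z : G ⧸ M)) ^ ((p : ℤ) * u) = 1 := by
              rw [zpow_mul, zpow_natCast, hzbar, one_zpow]
            have h2 : ((z : G ⧸ M)) ^ (j * v) = ((a 0 : G) : G ⧸ M) ^ v := by
              rw [zpow_mul, hj]
            calc ((z : G ⧸ M)) = ((z : G ⧸ M)) ^ (u * (p:ℤ) + v * j) := by rw [huv, zpow_one]
              _ = ((z : G ⧸ M)) ^ ((p:ℤ) * u) * ((z : G ⧸ M)) ^ (j * v) := by
                  rw [← zpow_add, mul_comm u ((p:ℤ)), mul_comm v j]
              _ = ((a 0 : G) : G ⧸ M) ^ v := by rw [h1, h2, one_mul]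
          have : (((z * ((a 0) ^ v)⁻¹ : G)) : G ⧸ M) = 1 := by
            rw [QuotientGroup.mk_mul, QuotientGroup.mk_inv, hzeq]
            rw [← QuotientGroup.mk_zpow]
            simp
          have hzM : z * ((a 0) ^ v)⁻¹ ∈ M := (QuotientGroup.eq_one_iff _).1 this
          have hzMD : z ∈ M ⊔ D := by
            have : z = (z * ((a 0) ^ v)⁻¹) * (a 0) ^ v := by group
            rw [this]
            exact mul_mem (Subgroup.mem_sup_left hzM)
              (Subgroup.mem_sup_right (zpow_mem ha0D v))
          rw [hxze]
          exact mul_mem hzMD (Subgroup.mem_sup_right heD)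
  have htop : M ⊔ D = ⊤ := by
    rw [eq_top_iff]
    intro x _
    exact key _ x rfl
  rcases hP _ _ htop with h | h
  · exact absurd (h ▸ Subgroup.mem_top (a 0)) h0M
  · intro x
    exact (hmemD x).1 (h ▸ Subgroup.mem_top x)

lemma exists_tower {p : ℕ} (hp : p.Prime) (hdiv : ∀ g : G, ∃ y : G, y ^ p = g)
    {a0 : G} (h0 : orderOf a0 = p) :
    ∃ a : ℕ → G, (∀ n, orderOf (a n) = p ^ (n + 1)) ∧ ∀ n, (a (n + 1)) ^ p = a n := by
  choose r hr using hdiv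
  refine ⟨fun n => r^[n] a0, ?_, fun n => by
    show (r^[n + 1] a0) ^ p = r^[n] a0
    rw [Function.iterate_succ_apply']; exact hr _⟩
  intro n
  induction n with
  | zero => simpa using h0
  | succ n ih =>
    set x := r^[n + 1] a0 with hxdef
    have hx : x ^ p = r^[n] a0 := by
      rw [hxdef, Function.iterate_succ_apply']; exact hr _
    have hone : x ^ p ^ (n + 2) = 1 := by
      rw [show p ^ (n + 2) = p * p ^ (n + 1) from by ring, pow_mul, hx, ← ih,
        pow_orderOf_eq_one]
    have hne : x ^ p ^ (n + 1) ≠ 1 := by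
      rw [show p ^ (n + 1) = p * p ^ n from by ring, pow_mul, hx]
      intro hcon
      have hdd := orderOf_dvd_of_pow_eq_one hcon
      rw [ih] at hdd
      have h1 := Nat.le_of_dvd (Nat.pos_of_ne_zero (pow_ne_zero n hp.ne_zero)) hdd
      have h2 := Nat.pow_lt_pow_right hp.one_lt (Nat.lt_succ_self n)
      rw [Nat.succ_eq_add_one] at h2
      omega
    have hdvd : orderOf x ∣ p ^ (n + 2) := orderOf_dvd_of_pow_eq_one hone
    obtain ⟨j, hjk, hj⟩ := (Nat.dvd_prime_pow hp).1 hdvd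
    have : ¬ j ≤ n + 1 := by
      intro hle
      apply hne
      apply orderOf_dvd_iff_pow_eq_one.1
      rw [hj]
      exact pow_dvd_pow p hle
    have : j = n + 2 := by omega
    rw [hj, this]

lemma prufer_iso {p : ℕ} (hp : p.Prime) (a : ℕ → G)
    (horder : ∀ n, orderOf (a n) = p ^ (n + 1))
    (hstep : ∀ n, (a (n + 1)) ^ p = a n)
    (hgen : ∀ x : G, ∃ n, x ∈ Subgroup.zpowers (a n)) :
    Nonempty (G ≃* Multiplicative (PruferGroup p)) := by
  have hp0 : (p : ℚ) ≠ 0 := Nat.cast_ne_zero.2 hp.ne_zero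
  set val : ℕ → ℤ → AddCircle (1 : ℚ) := fun n k => ((k : ℚ) / (p : ℚ) ^ (n + 1) : ℚ) with hval
  -- S1
  have S1 : ∀ n d : ℕ, ∀ k : ℤ, (a n) ^ k = (a (n + d)) ^ (k * (p : ℤ) ^ d) := by
    intro n d
    induction d with
    | zero => intro k; simp
    | succ d ih =>
      intro k
      rw [ih k, show n + (d + 1) = (n + d) + 1 from rfl]
      rw [show (a (n + d)) = (a (n + d + 1)) ^ (p : ℤ) from by
        rw [zpow_natCast, hstep]]
      rw [← zpow_mul]
      ring_nf
  -- S2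
  have S2 : ∀ n d : ℕ, ∀ k : ℤ, val n k = val (n + d) (k * (p : ℤ) ^ d) := by
    intro n d k
    have hq : ((k : ℚ) / (p:ℚ) ^ (n+1)) = (((k * (p:ℤ)^d : ℤ) : ℚ)) / (p:ℚ) ^ (n+d+1) := by
      push_cast
      rw [div_eq_div_iff (by positivity) (by positivity)]
      ring
    show (((k : ℚ) / (p:ℚ) ^ (n+1) : ℚ) : AddCircle (1:ℚ)) = _
    rw [hq]
  -- S4
  have S4 : ∀ (N : ℕ) (A B : ℤ), ((p : ℤ) ^ (N + 1)) ∣ (B - A) → val N A = val N B := by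
    intro N A B ⟨c, hc⟩
    rw [hval]
    apply (QuotientAddGroup.eq_iff_sub_mem).2
    rw [AddSubgroup.mem_zmultiples_iff]
    refine ⟨-c, ?_⟩
    have : (B : ℚ) - A = (p : ℚ) ^ (N + 1) * c := by
      exact_mod_cast congrArg (fun z : ℤ => (z : ℚ)) hc
    field_simp
    rw [zsmul_eq_mul, mul_one]; push_cast
    linarith [this]
  -- S3
  have S3 : ∀ n m : ℕ, ∀ k l : ℤ, (a n) ^ k = (a m) ^ l → val n k = val m l := by
    intro n m k l heq
    set N := max n m with hN
    obtain ⟨d1, hd1⟩ : ∃ d1, N = n + d1 := ⟨N - n, by omega⟩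
    obtain ⟨d2, hd2⟩ : ∃ d2, N = m + d2 := ⟨N - m, by omega⟩
    rw [S1 n d1 k, ← hd1] at heq
    rw [S1 m d2 l, ← hd2] at heq
    rw [zpow_eq_zpow_iff_modEq, horder N] at heq
    have hdvd : ((p : ℤ) ^ (N + 1)) ∣ (l * (p:ℤ) ^ d2 - k * (p:ℤ) ^ d1) := by
      have := heq.dvd
      simpa using this
    calc val n k = val N (k * (p:ℤ) ^ d1) := by rw [S2 n d1 k, ← hd1]
      _ = val N (l * (p:ℤ) ^ d2) := S4 N _ _ hdvd
      _ = val m l := by rw [S2 m d2 l, ← hd2]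
  -- S5
  have S5 : ∀ (N : ℕ) (A B : ℤ), val N (A + B) = val N A + val N B := by
    intro N A B
    rw [hval]
    simp only
    rw [← AddCircle.coe_add]
    congr 1
    push_cast
    ring
  -- membership
  have Smem : ∀ (n : ℕ) (k : ℤ), val n k ∈ PruferSubgroup p := by
    intro n k
    refine ⟨n + 1, ?_⟩
    rw [hval]
    simp only
    rw [← AddCircle.coe_nsmul]
    rw [AddCircle.coe_eq_zero_iff]
    refine ⟨k, ?_⟩
    rw [nsmul_eq_mul, zsmul_eq_mul]
    push_cast
    field_simp
  -- selection
  have hsel : ∀ x : G, ∃ nk : ℕ × ℤ, x = (a nk.1) ^ nk.2 := by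
    intro x
    obtain ⟨n, k, hk⟩ := hgen x
    exact ⟨⟨n, k⟩, hk.symm⟩
  choose f hf using hsel
  set Fv : G → AddCircle (1 : ℚ) := fun x => val (f x).1 (f x).2 with hFv
  have K1 : ∀ (x : G) (n : ℕ) (k : ℤ), x = (a n) ^ k → Fv x = val n k := by
    intro x n k hx
    exact S3 _ _ _ _ ((hf x).symm.trans hx)
  set F : G → PruferGroup p := fun x => ⟨Fv x, Smem _ _⟩ with hF
  have hone : F 1 = 0 := by
    apply Subtype.ext
    show Fv 1 = 0
    rw [K1 1 0 0 (by simp)]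
    rw [hval]
    simp
  have hmul : ∀ x y : G, F (x * y) = F x + F y := by
    intro x y
    obtain ⟨nx, kx, hx⟩ : ∃ n k, x = (a n) ^ (k : ℤ) := ⟨(f x).1, (f x).2, hf x⟩
    obtain ⟨ny, ky, hy⟩ : ∃ n k, y = (a n) ^ (k : ℤ) := ⟨(f y).1, (f y).2, hf y⟩
    set N := max nx ny with hN
    obtain ⟨d1, hd1⟩ : ∃ d1, N = nx + d1 := ⟨N - nx, by omega⟩
    obtain ⟨d2, hd2⟩ : ∃ d2, N = ny + d2 := ⟨N - ny, by omega⟩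
    have hx' : x = (a N) ^ (kx * (p:ℤ) ^ d1) := by rw [hx, S1 nx d1 kx, ← hd1]
    have hy' : y = (a N) ^ (ky * (p:ℤ) ^ d2) := by rw [hy, S1 ny d2 ky, ← hd2]
    have hxy : x * y = (a N) ^ (kx * (p:ℤ) ^ d1 + ky * (p:ℤ) ^ d2) := by
      rw [hx', hy', zpow_add]
    apply Subtype.ext
    show Fv (x * y) = Fv x + Fv y
    rw [K1 _ _ _ hxy, K1 _ _ _ hx', K1 _ _ _ hy', S5]
  have hinj : ∀ x : G, F x = 0 → x = 1 := by
    intro x hx0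
    obtain ⟨n, k, hx⟩ : ∃ n k, x = (a n) ^ (k : ℤ) := ⟨(f x).1, (f x).2, hf x⟩
    have : Fv x = 0 := congrArg Subtype.val hx0
    rw [K1 _ _ _ hx, hval] at this
    simp only at this
    rw [AddCircle.coe_eq_zero_iff] at this
    obtain ⟨c, hc⟩ := this
    rw [zsmul_eq_mul, mul_one] at hc
    have hk : (k : ℚ) = (c : ℚ) * (p : ℚ) ^ (n + 1) := by
      field_simp at hc
      linarith [hc]
    have hkz : k = c * (p : ℤ) ^ (n + 1) := by exact_mod_cast hk
    rw [hx, hkz, mul_comm, zpow_mul]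
    rw [show ((p : ℤ) ^ (n + 1)) = ((p ^ (n + 1) : ℕ) : ℤ) from by push_cast; ring]
    rw [zpow_natCast, ← horder n, pow_orderOf_eq_one, one_zpow]
  have hsurj : ∀ u : PruferGroup p, ∃ x : G, F x = u := by
    rintro ⟨u, s, hs⟩
    obtain ⟨q, rfl⟩ : ∃ q : ℚ, (q : AddCircle (1:ℚ)) = u := Quotient.exists_rep u
    rw [← AddCircle.coe_nsmul, AddCircle.coe_eq_zero_iff] at hs
    obtain ⟨c, hc⟩ := hs
    rw [zsmul_eq_mul, mul_one, nsmul_eq_mul] at hc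
    refine ⟨(a s) ^ ((c * p : ℤ)), ?_⟩
    apply Subtype.ext
    show Fv _ = (q : AddCircle (1:ℚ))
    rw [K1 _ s (c * p) rfl, hval]
    simp only
    congr 1
    have hq : q = (c : ℚ) / (p : ℚ) ^ s := by
      field_simp at hc ⊢
      rw [mul_comm] at hc
      push_cast at hc
      linarith [hc]
    rw [hq]
    push_cast
    field_simp
    ring
  set FM : G →* Multiplicative (PruferGroup p) :=
    { toFun := fun x => Multiplicative.ofAdd (F x),
      map_one' := congrArg Multiplicative.ofAdd hone,
      map_mul' := fun x y => congrArg Multiplicative.ofAdd (hmul x y) } with hFM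
  refine ⟨MulEquiv.ofBijective FM ⟨?_, ?_⟩⟩
  · apply (injective_iff_map_eq_one FM).2
    intro x hx
    apply hinj
    exact hx
  · intro u
    obtain ⟨x, hx⟩ := hsurj (Multiplicative.toAdd u)
    exact ⟨x, by rw [hFM]; simp only [MonoidHom.coe_mk, OneHom.coe_mk, hx]; rfl⟩


end Aux

/-- Let `G` be an abelian group such that `G ≠ K * L` for any two proper subgroups
`K, L`. Then `G` is a cyclic `p`-group or a quasicyclic `p`-group for some prime `p`. -/
theorem abelian_not_product_of_proper_subgroups {G : Type*} [CommGroup G]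
    (h : ∀ K L : Subgroup G, K ≠ ⊤ → L ≠ ⊤ → (K : Set G) * (L : Set G) ≠ Set.univ) :
    ∃ p : ℕ, p.Prime ∧ ((IsCyclic G ∧ IsPGroup p G) ∨ IsQuasicyclic p G) := by
  have hP : ∀ K L : Subgroup G, K ⊔ L = ⊤ → K = ⊤ ∨ L = ⊤ := by
    intro K L htop
    by_contra hcon
    push_neg at hcon
    apply h K L hcon.1 hcon.2
    rw [← Subgroup.mul_normal K L, htop]
    rfl
  by_cases hGtriv : ∀ g : G, g = 1
  · have hcy : IsCyclic G := ⟨⟨(1 : G), fun x => ⟨0, by rw [hGtriv x]; simp⟩⟩⟩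
    have hpg : IsPGroup 2 G := fun g => ⟨0, by rw [pow_zero, pow_one, hGtriv g]⟩
    exact ⟨2, Nat.prime_two, Or.inl ⟨hcy, hpg⟩⟩
  push_neg at hGtriv
  obtain ⟨g₀, hg₀⟩ := hGtriv
  have h00 : orderOf g₀ ≠ 0 := order_finite hP g₀
  have h01 : orderOf g₀ ≠ 1 := fun h1 => hg₀ (orderOf_eq_one_iff.1 h1)
  obtain ⟨r, hr, hrdvd⟩ := Nat.exists_prime_and_dvd h01
  have hGp : IsPGroup r G := ispgroup_of hP hr hrdvd
  by_cases hcyc : ∃ g : G, Subgroup.zpowers g = ⊤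
  · obtain ⟨g, hg⟩ := hcyc
    refine ⟨r, hr, Or.inl ⟨⟨⟨g, fun x => ?_⟩⟩, hGp⟩⟩
    have hx : x ∈ Subgroup.zpowers g := hg ▸ Subgroup.mem_top x
    obtain ⟨k, hk⟩ := hx
    exact ⟨k, hk⟩
  push_neg at hcyc
  have hdiv := divisible_of_noncyclic hP hcyc hr
  have h0 : orderOf (g₀ ^ (orderOf g₀ / r)) = r := orderOf_pow_div_prime hr h00 hrdvd
  obtain ⟨a, horder, hstep⟩ := exists_tower hr hdiv h0
  have hgen := tower_gen hP hr hGp a horder hstep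
  exact ⟨r, hr, Or.inr (show IsQuasicyclic r G from prufer_iso hr a horder hstep hgen)⟩
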